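/- With the type B alphabet and two-row insertion rules as above, suppose α' ≤ α and (α, α') ≠ (∘, ∘). If inserting α into a two-row semistandard B tableau T adds a new box at the end of the first row, then inserting α' into the tableau (α → T) also adds a new box at the end of the first row. -/
import Mathlib


/-- A column with at most two boxes: `one β`, or `two α β` with `α` above `β`.
A tableau with at most two rows is a list of such columns, read left to right. -/
inductive BCol : Type
  | one (β : ℕ)
  | two (α β : ℕ)

/-- The type `B` alphabet `1 < ⋯ < n < ∘ < n̄ < ⋯ < 1̄` is encoded as
`{1, …, 2n+1}` with `∘ = n+1` and `x̄ = 2n+2−x` for `1 ≤ x ≤ n`. -/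
def barB (n x : ℕ) : ℕ := 2 * n + 2 - x

/-- The top (first-row) letter of a column. -/
def BCol.top : BCol → ℕ
  | .one β => β
  | .two α _ => α

/-- Validity of a single column of a semistandard `B` tableau: letters lie in
the alphabet, a two-box column `(α above β)` satisfies `α < β` or
`(α,β) = (∘,∘)`, and no column equals `(1 above 1̄)`. -/
def BColOK (n : ℕ) : BCol → Prop
  | .one β => 1 ≤ β ∧ β ≤ 2 * n + 1
  | .two α β => 1 ≤ α ∧ β ≤ 2 * n + 1 ∧ (α < β ∨ (α = n + 1 ∧ β = n + 1)) ∧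
      ¬(α = 1 ∧ β = 2 * n + 1)

/-- Conditions on two adjacent columns of a semistandard `B` tableau: the shape
has two-box columns to the left of one-box columns, both rows are weakly
increasing, the `(x,x)`-configurations (for `1 ≤ x < n`) are absent, and the
`(n,n)`-configurations (lower-left and upper-right entries equal to
`(n,n̄)`, `(n,∘)`, `(∘,∘)` or `(∘,n̄)`) are absent. -/
def BAdjOK (n : ℕ) : BCol → BCol → Prop
  | .one α, .one α' => α ≤ α'
  | .one _, .two _ _ => False
  | .two α β, .one α' => α ≤ α' ∧
      ¬((β = n ∨ β = n + 1) ∧ (α' = n + 1 ∨ α' = n + 2))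
  | .two α β, .two α' β' => α ≤ α' ∧ β ≤ β' ∧
      ¬((β = n ∨ β = n + 1) ∧ (α' = n + 1 ∨ α' = n + 2)) ∧
      ¬(∃ x, 1 ≤ x ∧ x < n ∧
        ((α = x ∧ α' = x ∧ β' = barB n x) ∨ (α = x ∧ β = barB n x ∧ β' = barB n x)))

/-- A semistandard `B` tableau with at most two rows, as a list of columns. -/
def SemistdB (n : ℕ) (cols : List BCol) : Prop :=
  (∀ c ∈ cols, BColOK n c) ∧ List.Chain' (BAdjOK n) cols

/-- `RunB n a cols cols' route`: the type `B` column insertion of the letter `a`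
into the tableau `cols` (elementary rules A0, A1, B0–B7) yields the tableau
`cols'`; `route` records, column by column along the bumping route, whether the
newly set letter lies in the first row (`true`) or in the second row (`false`). -/
inductive RunB (n : ℕ) : ℕ → List BCol → List BCol → List Bool → Prop
  | a0 (a : ℕ) :
      RunB n a [] [BCol.one a] [true]
  | a1 (a β : ℕ) (rest : List BCol)
      (h : β < a ∨ (β = n + 1 ∧ a = n + 1)) :
      RunB n a (BCol.one β :: rest) (BCol.two β a :: rest) [false]
  | b0 (a β : ℕ) (rest rest' : List BCol) (route : List Bool)
      (h : a ≤ β) (hne : ¬(a = n + 1 ∧ β = n + 1))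
      (hr : RunB n β rest rest' route) :
      RunB n a (BCol.one β :: rest) (BCol.one a :: rest') (true :: route)
  | b1 (a α γ : ℕ) (rest rest' : List BCol) (route : List Bool)
      (h1 : α < a) (h2 : a ≤ γ) (h3 : ¬(α ≤ n ∧ γ = barB n α))
      (h4 : ¬(a = n + 1 ∧ γ = n + 1))
      (hr : RunB n γ rest rest' route) :
      RunB n a (BCol.two α γ :: rest) (BCol.two α a :: rest') (false :: route)
  | b2 (a β γ : ℕ) (rest rest' : List BCol) (route : List Bool)
      (h1 : a ≤ β) (h2 : β < γ) (h3 : ¬(a ≤ n ∧ γ = barB n a))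
      (h4 : ¬(a = n + 1 ∧ β = n + 1))
      (hr : RunB n β rest rest' route) :
      RunB n a (BCol.two β γ :: rest) (BCol.two a γ :: rest') (true :: route)
  | b3 (x : ℕ) (rest rest' : List BCol) (route : List Bool)
      (hx1 : 1 ≤ x) (hx2 : x ≤ n)
      (hr : RunB n (barB n x) rest rest' route) :
      RunB n (n + 1) (BCol.two (n + 1) (barB n x) :: rest)
        (BCol.two (n + 1) (n + 1) :: rest') (false :: route)
  | b4 (x : ℕ) (rest rest' : List BCol) (route : List Bool)
      (hx1 : 1 ≤ x) (hx2 : x ≤ n)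
      (hr : RunB n (n + 1) rest rest' route) :
      RunB n x (BCol.two (n + 1) (n + 1) :: rest)
        (BCol.two x (n + 1) :: rest') (true :: route)
  | b5 (x β : ℕ) (rest rest' : List BCol) (route : List Bool)
      (hx1 : 2 ≤ x) (hx2 : x ≤ n) (h1 : x ≤ β) (h2 : β ≤ barB n x)
      (hr : RunB n (barB n (x - 1)) rest rest' route) :
      RunB n β (BCol.two x (barB n x) :: rest)
        (BCol.two (x - 1) β :: rest') (false :: route)
  | b6 (x β : ℕ) (rest rest' : List BCol) (route : List Bool)
      (hx1 : 1 ≤ x) (hx2 : x < n) (h1 : x < β) (h2 : β < barB n x)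
      (hr : RunB n β rest rest' route) :
      RunB n x (BCol.two β (barB n x) :: rest)
        (BCol.two (x + 1) (barB n (x + 1)) :: rest') (true :: route)
  | b7 (rest rest' : List BCol) (route : List Bool)
      (hr : RunB n (n + 2) rest rest' route) :
      RunB n n (BCol.two (n + 1) (n + 2) :: rest)
        (BCol.two n (n + 1) :: rest') (true :: route)


theorem runB_two_inv {n a p q : ℕ} {rest T₂ : List BCol} {r₂ : List Bool}
    (h : RunB n a (BCol.two p q :: rest) T₂ r₂) :
    ∃ p' q' b rest' route, T₂ = BCol.two p' q' :: rest' ∧ RunB n b rest rest' route ∧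
      ((p' = p ∧ q' = a ∧ b = q ∧ p < a ∧ a ≤ q ∧ ¬(p ≤ n ∧ q = barB n p) ∧ ¬(a = n+1 ∧ q = n+1)) ∨
       (p' = a ∧ q' = q ∧ b = p ∧ a ≤ p ∧ p < q ∧ ¬(a ≤ n ∧ q = barB n a) ∧ ¬(a = n+1 ∧ p = n+1)) ∨
       (∃ x, 1 ≤ x ∧ x ≤ n ∧ a = n+1 ∧ p = n+1 ∧ q = barB n x ∧ b = barB n x ∧ p' = n+1 ∧ q' = n+1) ∨
       (p = n+1 ∧ q = n+1 ∧ 1 ≤ a ∧ a ≤ n ∧ p' = a ∧ q' = n+1 ∧ b = n+1) ∨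
       (∃ x, 2 ≤ x ∧ x ≤ n ∧ p = x ∧ q = barB n x ∧ x ≤ a ∧ a ≤ barB n x ∧ p' = x-1 ∧ q' = a ∧ b = barB n (x-1)) ∨
       (∃ x, 1 ≤ x ∧ x < n ∧ a = x ∧ q = barB n x ∧ x < p ∧ p < barB n x ∧ p' = x+1 ∧ q' = barB n (x+1) ∧ b = p) ∨
       (a = n ∧ p = n+1 ∧ q = n+2 ∧ p' = n ∧ q' = n+1 ∧ b = n+2)) := by
  cases h with
  | b1 _a _p _q _rest rest' route h1 h2 h3 h4 hr =>
    exact ⟨_,_,_,_,_, rfl, hr, .inl ⟨rfl,rfl,rfl,h1,h2,h3,h4⟩⟩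
  | b2 _a _p _q _rest rest' route h1 h2 h3 h4 hr =>
    exact ⟨_,_,_,_,_, rfl, hr, .inr (.inl ⟨rfl,rfl,rfl,h1,h2,h3,h4⟩)⟩
  | b3 x _rest rest' route hx1 hx2 hr =>
    exact ⟨_,_,_,_,_, rfl, hr, .inr (.inr (.inl ⟨x,hx1,hx2,rfl,rfl,rfl,rfl,rfl,rfl⟩))⟩
  | b4 _x _rest rest' route hx1 hx2 hr =>
    exact ⟨_,_,_,_,_, rfl, hr, .inr (.inr (.inr (.inl ⟨rfl,rfl,hx1,hx2,rfl,rfl,rfl⟩)))⟩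
  | b5 _x _b _rest rest' route hx1 hx2 h1 h2 hr =>
    exact ⟨_,_,_,_,_, rfl, hr, .inr (.inr (.inr (.inr (.inl ⟨p,hx1,hx2,rfl,rfl,h1,h2,rfl,rfl,rfl⟩))))⟩
  | b6 _x _b _rest rest' route hx1 hx2 h1 h2 hr =>
    exact ⟨_,_,_,_,_, rfl, hr, .inr (.inr (.inr (.inr (.inr (.inl ⟨a,hx1,hx2,rfl,rfl,h1,h2,rfl,rfl,rfl⟩)))))⟩
  | b7 _rest rest' route hr =>
    exact ⟨_,_,_,_,_, rfl, hr, .inr (.inr (.inr (.inr (.inr (.inr ⟨rfl,rfl,rfl,rfl,rfl,rfl⟩)))))⟩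

theorem runB_nil_inv {n a : ℕ} {T₂ : List BCol} {r₂ : List Bool}
    (h : RunB n a [] T₂ r₂) : T₂ = [BCol.one a] := by
  cases h; rfl

theorem runB_one_inv {n a β : ℕ} {rest T₂ : List BCol} {r₂ : List Bool}
    (h : RunB n a (BCol.one β :: rest) T₂ r₂) :
    (T₂ = BCol.two β a :: rest ∧ (β < a ∨ (β = n + 1 ∧ a = n + 1))) ∨
    (∃ rest' route, T₂ = BCol.one a :: rest' ∧ a ≤ β ∧ ¬(a = n + 1 ∧ β = n + 1) ∧
      RunB n β rest rest' route) := by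
  cases h with
  | a1 _ _ _ h => exact .inl ⟨rfl, h⟩
  | b0 _ _ _ rest' route h hne hr => exact .inr ⟨rest', route, rfl, h, hne, hr⟩

theorem runB_len_aux (n : ℕ) : ∀ {a : ℕ} {T T₁ : List BCol} {r₁ : List Bool},
    RunB n a T T₁ r₁ →
    ∀ a' T₂ r₂, T₁.length = T.length + 1 → RunB n a' T₁ T₂ r₂ →
      a' ≤ a → ¬(a = n + 1 ∧ a' = n + 1) → T₂.length = T₁.length + 1 := by
  intro a T T₁ r₁ h1
  induction h1 with
  | a0 a =>
    intro a' T₂ r₂ hlen h2 hle hcc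
    rcases runB_one_inv h2 with ⟨rfl, h⟩ | ⟨rest', route, rfl, h, hne, hr⟩
    · omega
    · rw [runB_nil_inv hr]; simp
  | a1 a β rest h =>
    intro a' T₂ r₂ hlen h2 hle hcc
    simp at hlen
  | b0 a β rest rest' route h hne hr ih =>
    intro a' T₂ r₂ hlen h2 hle hcc
    rcases runB_one_inv h2 with ⟨rfl, h'⟩ | ⟨rest'', route', rfl, h', hne', hr'⟩
    · omega
    · simp only [List.length_cons] at hlen ⊢
      have := ih a rest'' route' (by omega) hr' h (by tauto)
      omega
  | b1 a p q rest rest' route h1 h2 h3 h4 hr ih =>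
    intro a' T₂ r₂ hlen h2' hle hcc
    obtain ⟨p', q', b, rest'', route', rfl, hrb, hC⟩ := runB_two_inv h2'
    simp only [List.length_cons] at hlen ⊢
    have key : b ≤ q ∧ ¬(q = n + 1 ∧ b = n + 1) := by
      simp only [barB] at *
      rcases hC with ⟨_,_,_,_,_,_,_⟩|⟨_,_,_,_,_,_,_⟩|⟨x,_,_,_,_,_,_,_,_⟩|⟨_,_,_,_,_,_,_⟩|⟨x,_,_,_,_,_,_,_,_,_⟩|⟨x,_,_,_,_,_,_,_,_,_⟩|⟨_,_,_,_,_,_⟩ <;> omega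
    have := ih b rest'' route' (by omega) hrb key.1 key.2
    omega
  | b2 a p q rest rest' route h1 h2 h3 h4 hr ih =>
    intro a' T₂ r₂ hlen h2' hle hcc
    obtain ⟨p', q', b, rest'', route', rfl, hrb, hC⟩ := runB_two_inv h2'
    simp only [List.length_cons] at hlen ⊢
    have key : b ≤ p ∧ ¬(p = n + 1 ∧ b = n + 1) := by
      simp only [barB] at *
      rcases hC with ⟨_,_,_,_,_,_,_⟩|⟨_,_,_,_,_,_,_⟩|⟨x,_,_,_,_,_,_,_,_⟩|⟨_,_,_,_,_,_,_⟩|⟨x,_,_,_,_,_,_,_,_,_⟩|⟨x,_,_,_,_,_,_,_,_,_⟩|⟨_,_,_,_,_,_⟩ <;> omega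
    have := ih b rest'' route' (by omega) hrb key.1 key.2
    omega
  | b3 x rest rest' route hx1 hx2 hr ih =>
    intro a' T₂ r₂ hlen h2' hle hcc
    obtain ⟨p', q', b, rest'', route', rfl, hrb, hC⟩ := runB_two_inv h2'
    simp only [List.length_cons] at hlen ⊢
    have key : b ≤ barB n x ∧ ¬(barB n x = n + 1 ∧ b = n + 1) := by
      simp only [barB] at *
      rcases hC with ⟨_,_,_,_,_,_,_⟩|⟨_,_,_,_,_,_,_⟩|⟨x,_,_,_,_,_,_,_,_⟩|⟨_,_,_,_,_,_,_⟩|⟨x,_,_,_,_,_,_,_,_,_⟩|⟨x,_,_,_,_,_,_,_,_,_⟩|⟨_,_,_,_,_,_⟩ <;> omega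
    have := ih b rest'' route' (by omega) hrb key.1 key.2
    omega
  | b4 x rest rest' route hx1 hx2 hr ih =>
    intro a' T₂ r₂ hlen h2' hle hcc
    obtain ⟨p', q', b, rest'', route', rfl, hrb, hC⟩ := runB_two_inv h2'
    simp only [List.length_cons] at hlen ⊢
    have key : b ≤ n + 1 ∧ ¬(n + 1 = n + 1 ∧ b = n + 1) := by
      simp only [barB] at *
      rcases hC with ⟨_,_,_,_,_,_,_⟩|⟨_,_,_,_,_,_,_⟩|⟨x,_,_,_,_,_,_,_,_⟩|⟨_,_,_,_,_,_,_⟩|⟨x,_,_,_,_,_,_,_,_,_⟩|⟨x,_,_,_,_,_,_,_,_,_⟩|⟨_,_,_,_,_,_⟩ <;> omega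
    have := ih b rest'' route' (by omega) hrb key.1 key.2
    omega
  | b5 x β rest rest' route hx1 hx2 h1 h2 hr ih =>
    intro a' T₂ r₂ hlen h2' hle hcc
    obtain ⟨p', q', b, rest'', route', rfl, hrb, hC⟩ := runB_two_inv h2'
    simp only [List.length_cons] at hlen ⊢
    have key : b ≤ barB n (x - 1) ∧ ¬(barB n (x - 1) = n + 1 ∧ b = n + 1) := by
      simp only [barB] at *
      rcases hC with ⟨_,_,_,_,_,_,_⟩|⟨_,_,_,_,_,_,_⟩|⟨x,_,_,_,_,_,_,_,_⟩|⟨_,_,_,_,_,_,_⟩|⟨x,_,_,_,_,_,_,_,_,_⟩|⟨x,_,_,_,_,_,_,_,_,_⟩|⟨_,_,_,_,_,_⟩ <;> omega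
    have := ih b rest'' route' (by omega) hrb key.1 key.2
    omega
  | b6 x β rest rest' route hx1 hx2 h1 h2 hr ih =>
    intro a' T₂ r₂ hlen h2' hle hcc
    obtain ⟨p', q', b, rest'', route', rfl, hrb, hC⟩ := runB_two_inv h2'
    simp only [List.length_cons] at hlen ⊢
    have key : b ≤ β ∧ ¬(β = n + 1 ∧ b = n + 1) := by
      simp only [barB] at *
      rcases hC with ⟨_,_,_,_,_,_,_⟩|⟨_,_,_,_,_,_,_⟩|⟨x,_,_,_,_,_,_,_,_⟩|⟨_,_,_,_,_,_,_⟩|⟨x,_,_,_,_,_,_,_,_,_⟩|⟨x,_,_,_,_,_,_,_,_,_⟩|⟨_,_,_,_,_,_⟩ <;> omega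
    have := ih b rest'' route' (by omega) hrb key.1 key.2
    omega
  | b7 rest rest' route hr ih =>
    intro a' T₂ r₂ hlen h2' hle hcc
    obtain ⟨p', q', b, rest'', route', rfl, hrb, hC⟩ := runB_two_inv h2'
    simp only [List.length_cons] at hlen ⊢
    have key : b ≤ n + 2 ∧ ¬(n + 2 = n + 1 ∧ b = n + 1) := by
      simp only [barB] at *
      rcases hC with ⟨_,_,_,_,_,_,_⟩|⟨_,_,_,_,_,_,_⟩|⟨x,_,_,_,_,_,_,_,_⟩|⟨_,_,_,_,_,_,_⟩|⟨x,_,_,_,_,_,_,_,_,_⟩|⟨x,_,_,_,_,_,_,_,_,_⟩|⟨_,_,_,_,_,_⟩ <;> omega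
    have := ih b rest'' route' (by omega) hrb key.1 key.2
    omega
/-- Corollary of the type `B` column bumping lemma: if `α' ≤ α` with
`(α,α') ≠ (∘,∘)`, and inserting `α` into a two-row semistandard `B` tableau `T`
adds a new box at the end of the first row (i.e. creates a new column), then
inserting `α'` into `(α → T)` also adds a new box at the end of the first row. -/
theorem stmt_10 (n : ℕ) (hn : 2 ≤ n) (α α' : ℕ)
    (hv1 : 1 ≤ α') (hv2 : α ≤ 2 * n + 1) (hle : α' ≤ α)
    (hcc : ¬(α = n + 1 ∧ α' = n + 1))
    (T T₁ T₂ : List BCol) (r₁ r₂ : List Bool)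
    (hT : SemistdB n T)
    (h1 : RunB n α T T₁ r₁) (hfirst : T₁.length = T.length + 1)
    (h2 : RunB n α' T₁ T₂ r₂) :
    T₂.length = T₁.length + 1 := by
  exact runB_len_aux n h1 α' T₂ r₂ hfirst h2 hle hcc
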